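/- For 3 < k ≤ n, one has the exact identity (Δ_{k−1} ⊗ 1)(Δ_2(P)) + (1 ⊗ Δ_{k−1})(Δ_2(P)) = Σ_{0<i_1<⋯<i_{k−1}<n} ( v_1 ⊗ e_{i_1} ⊗ ⋯ ⊗ e_{i_{k−1}} + e_{i_1} ⊗ ⋯ ⊗ e_{i_{k−1}} ⊗ v_n ) in C^{⊗k}; i.e. the composition Δ_{k−1}Δ_2 applied to P produces exactly all minimally extreme terms (those beginning with v_1) and all maximally extreme terms (those ending with v_n). -/

import Mathlib

noncomputable section

/-- Cells of an `n`-gon: `v i` models the vertex `v_{i+1}`, `e i` models the edge `e_{i+1}`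
(so indices are 0-based), and `F` models the 2-cell `P`. -/
inductive Cell (n : ℕ) : Type where
  | v : Fin n → Cell n
  | e : Fin n → Cell n
  | F : Cell n
deriving DecidableEq

/-- `Tens R n k` models `C^{⊗ k}`, the free `R`-module on `k`-tuples of cells. -/
abbrev Tens (R : Type) [CommRing R] (n k : ℕ) : Type := (Fin k → Cell n) →₀ R

/-- The basis tensor corresponding to a tuple of cells. -/
def bt (R : Type) [CommRing R] {n k : ℕ} (x : Fin k → Cell n) : Tens R n k :=
  Finsupp.single x 1

/-- Degree of a cell. -/
def degC {n : ℕ} : Cell n → ℕ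
  | .v _ => 0
  | .e _ => 1
  | .F => 2

/-- `(-1)^m` in `R`. -/
def sgn (R : Type) [CommRing R] (m : ℤ) : R := if Even m then 1 else -1

/-- The boundary operator on basis cells: `∂(v_i) = 0`, `∂(e_i) = v_{i+1} - v_i` for `i < n`,
`∂(e_n) = v_n - v_1`, `∂(P) = e_1 + ⋯ + e_{n-1} - e_n`. -/
def dB (R : Type) [CommRing R] (n : ℕ) : Cell n → Tens R n 1
  | .v _ => 0
  | .e i =>
      if h : (i : ℕ) + 1 < n then
        bt R (fun _ => Cell.v ⟨(i : ℕ) + 1, h⟩) - bt R (fun _ => Cell.v i)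
      else
        bt R (fun _ => Cell.v i) - bt R (fun _ => Cell.v ⟨0, i.pos⟩)
  | .F => ∑ i : Fin n, (if (i : ℕ) + 1 < n then (1 : R) else -1) • bt R (fun _ => Cell.e i)

/-- `Σ_{0<i_1<⋯<i_k<n} e_{i_1} ⊗ ⋯ ⊗ e_{i_k}` (with 0-based indices: strictly increasing
tuples of edge indices all `< n-1`). -/
def esum (R : Type) [CommRing R] (n k : ℕ) : Tens R n k :=
  ∑ f : Fin k → Fin n,
    if (∀ p q : Fin k, p < q → f p < f q) ∧ (∀ p : Fin k, ((f p) : ℕ) + 1 < n) then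
      bt R (fun p => Cell.e (f p))
    else 0

/-- The `A_∞`-coalgebra operations on basis cells: `DeltaB R n 2` is the Kravatz diagonal
`Δ₂` and for `k ≥ 3`, `DeltaB R n k` is `Δ_k`, which vanishes on vertices and edges and sends
`P` to `Σ_{0<i_1<⋯<i_k<n} e_{i_1} ⊗ ⋯ ⊗ e_{i_k}`. -/
def DeltaB (R : Type) [CommRing R] (n : ℕ) (k : ℕ) : Cell n → Tens R n k
  | .v i => if k = 2 then bt R (fun _ => Cell.v i) else 0
  | .e i =>
      if k = 2 then
        if h : (i : ℕ) + 1 < n then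
          bt R (fun p => if (p : ℕ) = 0 then Cell.v i else Cell.e i) +
            bt R (fun p => if (p : ℕ) = 0 then Cell.e i else Cell.v ⟨(i : ℕ) + 1, h⟩)
        else
          bt R (fun p => if (p : ℕ) = 0 then Cell.v ⟨0, i.pos⟩ else Cell.e i) +
            bt R (fun p => if (p : ℕ) = 0 then Cell.e i else Cell.v i)
      else 0
  | .F =>
      esum R n k +
        (if h : k = 2 ∧ 0 < n then
          bt R (fun p => if (p : ℕ) = 0 then Cell.v ⟨0, h.2⟩ else Cell.F) +
            bt R (fun p => if (p : ℕ) = 0 then Cell.F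
                  else Cell.v ⟨n - 1, Nat.sub_lt h.2 Nat.one_pos⟩)
        else 0)

/-- Extension of a map defined on basis tensors to a linear map. -/
def lext (R : Type) [CommRing R] (n : ℕ) {k m : ℕ} (φ : (Fin k → Cell n) → Tens R n m) :
    Tens R n k →ₗ[R] Tens R n m :=
  Finsupp.linearCombination R φ

/-- Splicing a `j`-tuple into a `k`-tuple at position `a`, producing an `m`-tuple
(meaningful when `m = k + j - 1` and `a < k`). -/
def splice {n k j : ℕ} (m a : ℕ) (x : Fin k → Cell n) (y : Fin j → Cell n) :
    Fin m → Cell n := fun q =>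
  if h1 : (q : ℕ) < a ∧ (q : ℕ) < k then x ⟨q, h1.2⟩
  else if h2 : a ≤ (q : ℕ) ∧ (q : ℕ) - a < j then y ⟨(q : ℕ) - a, h2.2⟩
  else if h3 : (q : ℕ) + 1 - j < k then x ⟨(q : ℕ) + 1 - j, h3⟩
  else Cell.F

/-- `opp R n k m j a p g` is the linear map `1^{⊗a} ⊗ g ⊗ 1^{⊗(k-1-a)} : C^{⊗k} → C^{⊗m}`
(meaningful when `m = k + j - 1`), where `g` is the basis-level description of an operation
`C → C^{⊗j}` of degree `p`, evaluated with the Koszul sign convention. -/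
def opp (R : Type) [CommRing R] (n : ℕ) (k m j a : ℕ) (p : ℤ) (g : Cell n → Tens R n j) :
    Tens R n k →ₗ[R] Tens R n m :=
  lext R n fun x =>
    if ha : a < k then
      sgn R (p * ∑ q : Fin k, if (q : ℕ) < a then (degC (x q) : ℤ) else 0) •
        Finsupp.mapDomain (splice m a x) (g (x ⟨a, ha⟩))
    else 0

/-- `Δ_k` as a linear map `C → C^{⊗k}`. -/
def Dmap (R : Type) [CommRing R] (n k : ℕ) : Tens R n 1 →ₗ[R] Tens R n k :=
  lext R n fun x => DeltaB R n k (x 0)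

/-- The boundary `∂` as a linear map `C → C`. -/
def bdry (R : Type) [CommRing R] (n : ℕ) : Tens R n 1 →ₗ[R] Tens R n 1 :=
  lext R n fun x => dB R n (x 0)

/-- The top cell `P` as a chain. -/
def cellP (R : Type) [CommRing R] (n : ℕ) : Tens R n 1 := bt R (fun _ => Cell.F)

end

section
variable (R : Type) [CommRing R]

lemma opp_bt (n k m j a : ℕ) (p : ℤ) (g : Cell n → Tens R n j)
    (x : Fin k → Cell n) (ha : a < k) :
    opp R n k m j a p g (bt R x) =
      sgn R (p * ∑ q : Fin k, if (q : ℕ) < a then (degC (x q) : ℤ) else 0) •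
        Finsupp.mapDomain (splice m a x) (g (x ⟨a, ha⟩)) := by
  simp [opp, lext, bt, Finsupp.linearCombination_single, ha]

lemma opp_esum2 (n m j a : ℕ) (p : ℤ) (hj : j ≠ 2) (ha : a < 2) :
    opp R n 2 m j a p (DeltaB R n j) (esum R n 2) = 0 := by
  rw [esum, map_sum]
  apply Finset.sum_eq_zero
  intro f _
  split
  · rw [opp_bt R n 2 m j a p _ _ ha]
    have : DeltaB R n j ((fun p => Cell.e (f p)) (⟨a, ha⟩ : Fin 2)) = 0 := by
      simp [DeltaB, hj]
    rw [this]
    simp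
  · simp

end

/-- For `3 < k ≤ n`:
`(Δ_{k-1}⊗1)(Δ₂(P)) + (1⊗Δ_{k-1})(Δ₂(P)) =
  Σ_{0<i₁<⋯<i_{k-1}<n} (v₁ ⊗ e_{i₁} ⊗ ⋯ ⊗ e_{i_{k-1}} + e_{i₁} ⊗ ⋯ ⊗ e_{i_{k-1}} ⊗ v_n)`:
the composition `Δ_{k-1}Δ₂` applied to `P` produces exactly all minimally extreme and all
maximally extreme terms. -/
theorem Dk1_D2_extreme_terms (R : Type) [CommRing R] (n k : ℕ) (hn : 3 ≤ n)
    (hk : 3 < k) (hkn : k ≤ n) :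
    (opp R n 2 k (k - 1) 0 ((k : ℤ) - 3) (DeltaB R n (k - 1))) (DeltaB R n 2 Cell.F) +
        (opp R n 2 k (k - 1) 1 ((k : ℤ) - 3) (DeltaB R n (k - 1))) (DeltaB R n 2 Cell.F) =
      ∑ f : Fin (k - 1) → Fin n,
        if (∀ p q : Fin (k - 1), p < q → f p < f q) ∧
            (∀ p : Fin (k - 1), ((f p) : ℕ) + 1 < n) then
          bt R (fun q : Fin k =>
            if hq : (q : ℕ) = 0 then Cell.v ⟨0, by omega⟩
            else Cell.e (f ⟨(q : ℕ) - 1, by have := q.isLt; omega⟩)) +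
          bt R (fun q : Fin k =>
            if hq : (q : ℕ) < k - 1 then Cell.e (f ⟨(q : ℕ), hq⟩)
            else Cell.v ⟨n - 1, by omega⟩)
        else 0 := by
  have hk2 : k - 1 ≠ 2 := by omega
  have h0 : (0:ℕ) < n := by omega
  have hD2 : DeltaB R n 2 Cell.F = esum R n 2 +
      (bt R (fun p : Fin 2 => if (p:ℕ) = 0 then Cell.v ⟨0, h0⟩ else Cell.F) +
       bt R (fun p : Fin 2 => if (p:ℕ) = 0 then Cell.F
              else Cell.v ⟨n - 1, Nat.sub_lt h0 Nat.one_pos⟩)) := by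
    show esum R n 2 + _ = _
    rw [dif_pos ⟨rfl, h0⟩]
  rw [hD2, map_add, map_add, map_add, map_add,
    opp_esum2 R n k (k-1) 0 ((k:ℤ)-3) hk2 (by norm_num),
    opp_esum2 R n k (k-1) 1 ((k:ℤ)-3) hk2 (by norm_num),
    opp_bt R n 2 k (k-1) 0 ((k:ℤ)-3) _ _ (by norm_num),
    opp_bt R n 2 k (k-1) 0 ((k:ℤ)-3) _ _ (by norm_num),
    opp_bt R n 2 k (k-1) 1 ((k:ℤ)-3) _ _ (by norm_num),
    opp_bt R n 2 k (k-1) 1 ((k:ℤ)-3) _ _ (by norm_num)]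
  have hDv : ∀ i : Fin n, DeltaB R n (k-1) (Cell.v i) = 0 := fun i => by
    simp [DeltaB, hk2]
  have hDF : DeltaB R n (k-1) Cell.F = esum R n (k-1) := by
    simp [DeltaB, hk2]
  norm_num [hDv, hDF, sgn, Fin.sum_univ_two, degC]
  rw [esum, Finsupp.mapDomain_finset_sum, Finsupp.mapDomain_finset_sum,
    ← Finset.sum_add_distrib]
  apply Finset.sum_congr rfl
  intro f _
  split_ifs with hc
  · rw [add_comm]
    simp only [bt, Finsupp.mapDomain_single]
    congr 2
    · funext q
      by_cases hq0 : (q:ℕ) = 0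
      · rw [if_pos hq0]
        simp only [splice]
        rw [dif_pos ⟨by omega, by omega⟩]
        simp [hq0]
      · rw [if_neg hq0]
        simp only [splice]
        rw [dif_neg (by omega), dif_pos ⟨by omega, by have := q.isLt; omega⟩]
    · funext q
      by_cases hq : (q:ℕ) < k - 1
      · rw [dif_pos hq]
        simp only [splice]
        rw [dif_neg (by omega), dif_pos ⟨by omega, by omega⟩]
        exact congrArg (fun i => Cell.e (f i)) (Fin.ext (Nat.sub_zero _))
      · rw [dif_neg hq]
        simp only [splice]
        rw [dif_neg (by omega), dif_neg (by omega),
          dif_pos (by have := q.isLt; omega)]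
        rw [if_neg (by have := q.isLt; intro h; rw [Fin.ext_iff] at h; simp only [Fin.val_zero, Fin.val_mk] at h; omega)]
  · simp
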